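/- Let s ≥ 1 and l ≥ 1 be integers and let y_1 < y_2 < ... < y_s be integers. For 0 ≤ m ≤ l set ν_m = Σ_{1 ≤ ξ_1 < ξ_2 < ... < ξ_m ≤ s+l-1} ξ_1·ξ_2···ξ_m (the m-th elementary symmetric function of 1, 2, ..., s+l-1), with ν_0 = 1. Then Σ_{r=0}^{l} (-1)^{l-r} ν_{l-r} · ( Σ_{α_1+...+α_s = r, α_i ≥ 0} y_1^{α_1} y_2^{α_2} ··· y_s^{α_s} ) = Σ_{1 ≤ i_1 ≤ i_2 ≤ ... ≤ i_l ≤ s} Π_{t=1}^{l} ( y_{i_t} - (i_t + t - 1) ). -/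

import Mathlib

open Finset Finset.Nat

private def Ee (z : ℕ → ℤ) : ℕ → ℕ → ℤ
  | 0, 0 => 1
  | 0, _+1 => 0
  | _+1, 0 => 1
  | N+1, m+1 => Ee z N (m+1) + z N * Ee z N m

private def Hh (y : ℕ → ℤ) : ℕ → ℕ → ℤ
  | _, 0 => 1
  | 0, _+1 => 0
  | n+1, r+1 => Hh y n (r+1) + y n * Hh y (n+1) r

private def Rr (y z : ℕ → ℤ) : ℕ → ℕ → ℤ
  | _, 0 => 1
  | 0, _+1 => 0
  | n+1, l+1 => Rr y z n (l+1) + (y n - z (n + l)) * Rr y z (n+1) l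

private lemma Ee_zero (z : ℕ → ℤ) (N : ℕ) : Ee z N 0 = 1 := by cases N <;> simp [Ee]

private lemma Ee_gt (z : ℕ → ℤ) : ∀ N m, N < m → Ee z N m = 0 := by
  intro N
  induction N with
  | zero => intro m hm; obtain ⟨m', rfl⟩ := Nat.exists_eq_add_of_lt hm; simp [Ee]
  | succ N ih =>
    intro m hm
    obtain ⟨m', rfl⟩ : ∃ m', m = m' + 1 := ⟨m - 1, by omega⟩
    simp only [Ee]
    rw [ih _ (by omega), ih _ (by omega)]
    ring

private lemma claimA (y z : ℕ → ℤ) (n l N : ℕ) :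
    ∑ p ∈ antidiagonal (l+1), (-1:ℤ)^p.1 * Ee z N p.1 * Hh y (n+1) p.2
      = (∑ p ∈ antidiagonal (l+1), (-1:ℤ)^p.1 * Ee z N p.1 * Hh y n p.2)
        + y n * ∑ p ∈ antidiagonal l, (-1:ℤ)^p.1 * Ee z N p.1 * Hh y (n+1) p.2 := by
  rw [sum_antidiagonal_succ' (f := fun p => (-1:ℤ)^p.1 * Ee z N p.1 * Hh y (n+1) p.2),
      sum_antidiagonal_succ' (f := fun p => (-1:ℤ)^p.1 * Ee z N p.1 * Hh y n p.2)]
  have h1 : ∀ p ∈ antidiagonal l, (-1:ℤ)^p.1 * Ee z N p.1 * Hh y (n+1) (p.2+1)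
      = (-1:ℤ)^p.1 * Ee z N p.1 * Hh y n (p.2+1)
        + y n * ((-1:ℤ)^p.1 * Ee z N p.1 * Hh y (n+1) p.2) := by
    intro p _
    simp only [Hh]
    ring
  rw [Finset.sum_congr rfl h1, Finset.sum_add_distrib, ← Finset.mul_sum]
  simp only [Hh]
  ring

private lemma claimB (y z : ℕ → ℤ) (c l N : ℕ) :
    ∑ p ∈ antidiagonal (l+1), (-1:ℤ)^p.1 * Ee z (N+1) p.1 * Hh y c p.2
      = (∑ p ∈ antidiagonal (l+1), (-1:ℤ)^p.1 * Ee z N p.1 * Hh y c p.2)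
        - z N * ∑ p ∈ antidiagonal l, (-1:ℤ)^p.1 * Ee z N p.1 * Hh y c p.2 := by
  rw [sum_antidiagonal_succ (f := fun p => (-1:ℤ)^p.1 * Ee z (N+1) p.1 * Hh y c p.2),
      sum_antidiagonal_succ (f := fun p => (-1:ℤ)^p.1 * Ee z N p.1 * Hh y c p.2)]
  have h1 : ∀ p ∈ antidiagonal l, (-1:ℤ)^(p.1+1) * Ee z (N+1) (p.1+1) * Hh y c p.2
      = (-1:ℤ)^(p.1+1) * Ee z N (p.1+1) * Hh y c p.2
        - z N * ((-1:ℤ)^p.1 * Ee z N p.1 * Hh y c p.2) := by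
    intro p _
    simp only [Ee]
    ring
  rw [Finset.sum_congr rfl h1, Finset.sum_sub_distrib, ← Finset.mul_sum]
  rw [Ee_zero, Ee_zero]
  ring

/-- `Ll y z n l` is `L` with `n+1` variables. -/
private def Ll (y z : ℕ → ℤ) (n l : ℕ) : ℤ :=
  ∑ p ∈ antidiagonal l, (-1:ℤ)^p.1 * Ee z (n + l) p.1 * Hh y (n+1) p.2

private lemma Lrec (y z : ℕ → ℤ) (n l : ℕ) :
    Ll y z (n+1) (l+1) = Ll y z n (l+1) + (y (n+1) - z (n+l+1)) * Ll y z (n+1) l := by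
  cases l with
  | zero =>
    simp only [Ll]
    rw [sum_antidiagonal_succ (f := fun p => (-1:ℤ)^p.1 * Ee z (n+1+1) p.1 * Hh y (n+2) p.2),
        sum_antidiagonal_succ (f := fun p => (-1:ℤ)^p.1 * Ee z (n+0+1) p.1 * Hh y (n+1) p.2)]
    simp only [antidiagonal_zero, Finset.sum_singleton]
    simp only [Ee, Ee_zero, Hh]
    ring
  | succ l =>
    have key : Ll y z (n+1) (l+1+1)
        = (∑ p ∈ antidiagonal (l+1+1), (-1:ℤ)^p.1 * Ee z (n+l+3) p.1 * Hh y (n+1) p.2)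
          + y (n+1) * ∑ p ∈ antidiagonal (l+1), (-1:ℤ)^p.1 * Ee z (n+l+3) p.1 * Hh y (n+2) p.2 := by
      have := claimA y z (n+1) (l+1) (n+l+3)
      simpa [Ll, show n+1+(l+1+1) = n+l+3 by ring] using this
    rw [key]
    have e1 := claimB y z (n+1) (l+1) (n+l+2)
    have e2 := claimB y z (n+2) l (n+l+2)
    have e3 := claimA y z (n+1) l (n+l+2)
    have hL1 : Ll y z n (l+1+1)
        = ∑ p ∈ antidiagonal (l+1+1), (-1:ℤ)^p.1 * Ee z (n+l+2) p.1 * Hh y (n+1) p.2 := by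
      simp [Ll, show n+(l+1+1) = n+l+2 by ring]
    have hL2 : Ll y z (n+1) (l+1)
        = ∑ p ∈ antidiagonal (l+1), (-1:ℤ)^p.1 * Ee z (n+l+2) p.1 * Hh y (n+2) p.2 := by
      simp [Ll, show n+1+(l+1) = n+l+2 by ring]
    have hN : n+l+3 = (n+l+2)+1 := by ring
    rw [hN] at e1 e2 ⊢
    rw [e1, e2, hL1, hL2]
    have hz : n+(l+1)+1 = n+l+2 := rfl
    rw [hz]
    have e3' : (∑ p ∈ antidiagonal (l+1), (-1:ℤ)^p.1 * Ee z (n+l+2) p.1 * Hh y (n+2) p.2)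
        = (∑ p ∈ antidiagonal (l+1), (-1:ℤ)^p.1 * Ee z (n+l+2) p.1 * Hh y (n+1) p.2)
          + y (n+1) * ∑ p ∈ antidiagonal l, (-1:ℤ)^p.1 * Ee z (n+l+2) p.1 * Hh y (n+2) p.2 := e3
    linear_combination (z (n+l+2)) * e3'

private lemma Rr_succ (y z : ℕ → ℤ) (n l : ℕ) :
    Rr y z (n+1) (l+1) = Rr y z n (l+1) + (y n - z (n+l)) * Rr y z (n+1) l := by
  simp [Rr]

private lemma LeqR (y z : ℕ → ℤ) : ∀ l n, Ll y z n l = Rr y z (n+1) l := by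
  intro l
  induction l with
  | zero => intro n; simp [Ll, Rr, Ee_zero, Hh]
  | succ l ihl =>
    intro n
    induction n with
    | zero =>
      have key : Ll y z 0 (l+1) = (y 0 - z l) * Ll y z 0 l := by
        have e1 := claimB y z 1 l l
        have h0 : Ll y z 0 (l+1)
            = ∑ p ∈ antidiagonal (l+1), (-1:ℤ)^p.1 * Ee z (l+1) p.1 * Hh y 1 p.2 := by
          simp [Ll]
        have h1 : (∑ p ∈ antidiagonal (l+1), (-1:ℤ)^p.1 * Ee z l p.1 * Hh y 1 p.2)
            = y 0 * Ll y z 0 l := by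
          rw [sum_antidiagonal_succ' (f := fun p => (-1:ℤ)^p.1 * Ee z l p.1 * Hh y 1 p.2)]
          rw [Ee_gt z l (l+1) (by omega)]
          have h2 : ∀ p ∈ antidiagonal l, (-1:ℤ)^p.1 * Ee z l p.1 * Hh y 1 (p.2+1)
              = y 0 * ((-1:ℤ)^p.1 * Ee z l p.1 * Hh y 1 p.2) := by
            intro p _
            simp only [Hh]
            ring
          rw [Finset.sum_congr rfl h2, ← Finset.mul_sum]
          simp [Ll]
        have hL : Ll y z 0 l
            = ∑ p ∈ antidiagonal l, (-1:ℤ)^p.1 * Ee z l p.1 * Hh y 1 p.2 := by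
          simp [Ll]
        rw [h0, e1, h1, ← hL]
        ring
      rw [key, ihl 0, Rr_succ y z 0 l, Nat.zero_add]
      have h00 : Rr y z 0 (l+1) = 0 := by simp [Rr]
      rw [h00]
      ring_nf
    | succ n ihn =>
      rw [Lrec, ihn, ihl (n+1), Rr_succ y z (n+1) l, Nat.add_right_comm n 1 l]

private lemma Esum (N m : ℕ) :
    (∑ A ∈ (Finset.Icc 1 N).powersetCard m, ∏ x ∈ A, (x : ℤ))
      = Ee (fun k => (k : ℤ) + 1) N m := by
  induction N generalizing m with
  | zero =>
    cases m with
    | zero => simp [Ee]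
    | succ m =>
      have : (Finset.Icc 1 0 : Finset ℕ) = ∅ := rfl
      rw [this]
      rw [Finset.powersetCard_eq_empty.mpr (by simp)]; simp [Ee]
  | succ N ih =>
    cases m with
    | zero => simp [Ee_zero]
    | succ m =>
      have hins : Finset.Icc 1 (N+1) = insert (N+1) (Finset.Icc 1 N) :=
        (Finset.insert_Icc_right_eq_Icc_add_one (by omega)).symm
      have hnm : (N+1) ∉ Finset.Icc 1 N := by simp
      have hinj : ∀ A ∈ (Finset.Icc 1 N).powersetCard m,
          ∀ B ∈ (Finset.Icc 1 N).powersetCard m,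
          insert (N+1) A = insert (N+1) B → A = B := by
        intro A hA B hB hAB
        have hna : (N+1) ∉ A := fun h => hnm ((Finset.mem_powersetCard.mp hA).1 h)
        have hnb : (N+1) ∉ B := fun h => hnm ((Finset.mem_powersetCard.mp hB).1 h)
        rw [← Finset.erase_insert hna, ← Finset.erase_insert hnb, hAB]
      have hdisj : Disjoint ((Finset.Icc 1 N).powersetCard (m+1))
          (((Finset.Icc 1 N).powersetCard m).image (insert (N+1))) := by
        rw [Finset.disjoint_right]
        intro A hA hA'
        obtain ⟨B, hB, rfl⟩ := Finset.mem_image.mp hA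
        exact hnm ((Finset.mem_powersetCard.mp hA').1 (Finset.mem_insert_self _ _))
      rw [hins, Finset.powersetCard_succ_insert hnm, Finset.sum_union hdisj,
          Finset.sum_image hinj]
      have h1 : ∀ A ∈ (Finset.Icc 1 N).powersetCard m,
          (∏ x ∈ insert (N+1) A, (x:ℤ)) = ((N:ℤ)+1) * ∏ x ∈ A, (x:ℤ) := by
        intro A hA
        have hna : (N+1) ∉ A := fun h => hnm ((Finset.mem_powersetCard.mp hA).1 h)
        rw [Finset.prod_insert hna]
        push_cast
        ring
      rw [Finset.sum_congr rfl h1, ← Finset.mul_sum, ih, ih]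
      simp only [Ee]

private lemma adt_succ_sum {M : Type*} [AddCommMonoid M] (n r : ℕ) (f : (Fin (n+1) → ℕ) → M) :
    ∑ α ∈ antidiagonalTuple (n+1) r, f α
      = ∑ p ∈ antidiagonal r, ∑ β ∈ antidiagonalTuple n p.2, f (Fin.cons p.1 β) := by
  rw [Finset.sum_sigma']
  refine Finset.sum_bij'
    (fun (α : Fin (n+1) → ℕ) _ =>
      (⟨(α 0, ∑ i : Fin n, α i.succ), Fin.tail α⟩ : (_ : ℕ × ℕ) × (Fin n → ℕ)))
    (fun x _ => Fin.cons x.1.1 x.2) ?_ ?_ ?_ ?_ ?_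
  · intro α hα
    simp only [Finset.Nat.mem_antidiagonalTuple] at hα
    simp only [Finset.mem_sigma, Finset.HasAntidiagonal.mem_antidiagonal,
      Finset.Nat.mem_antidiagonalTuple]
    refine ⟨?_, rfl⟩
    rw [← hα, Fin.sum_univ_succ]
  · rintro ⟨p, β⟩ hx
    simp only [Finset.mem_sigma, Finset.HasAntidiagonal.mem_antidiagonal,
      Finset.Nat.mem_antidiagonalTuple] at hx ⊢
    rw [Fin.sum_cons, hx.2, hx.1]
  · intro α _
    exact Fin.cons_self_tail α
  · rintro ⟨p, β⟩ hx
    simp only [Finset.mem_sigma, Finset.HasAntidiagonal.mem_antidiagonal,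
      Finset.Nat.mem_antidiagonalTuple] at hx
    have h3 : (∑ i : Fin n, (Fin.cons p.1 β : Fin (n+1) → ℕ) i.succ) = p.2 := by
      simp only [Fin.cons_succ]
      exact hx.2
    have h1 : (Fin.cons p.1 β : Fin (n+1) → ℕ) 0 = p.1 := rfl
    refine Sigma.ext ?_ ?_
    · simp only [h1, h3, Fin.cons_succ]
      rw [hx.2]
    · simp [Fin.tail_cons]
  · intro α _
    rw [Fin.cons_self_tail]

private lemma Hh_zero_succ (y : ℕ → ℤ) (r : ℕ) : Hh y 0 (r+1) = 0 := by simp [Hh]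

private lemma Hh_one (f : ℕ → ℤ) : ∀ r, Hh f 1 r = f 0 ^ r := by
  intro r
  induction r with
  | zero => simp [Hh]
  | succ r ihr =>
    have : Hh f 1 (r+1) = Hh f 0 (r+1) + f 0 * Hh f 1 r := by simp [Hh]
    rw [this, Hh_zero_succ, ihr]
    ring

private lemma Hfront (f : ℕ → ℤ) : ∀ n r, Hh f (n+1) r
    = ∑ p ∈ antidiagonal r, f 0 ^ p.1 * Hh (fun k => f (k+1)) n p.2 := by
  intro n
  induction n with
  | zero =>
    intro r
    induction r with
    | zero => simp [Hh]
    | succ r ihr =>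
      rw [sum_antidiagonal_succ'
        (f := fun p => f 0 ^ p.1 * Hh (fun k => f (k+1)) 0 p.2)]
      have h1 : ∀ p ∈ antidiagonal r,
          f 0 ^ p.1 * Hh (fun k => f (k+1)) 0 (p.2+1) = 0 := by
        intro p _
        rw [Hh_zero_succ]
        ring
      rw [Finset.sum_congr rfl h1, Finset.sum_const_zero, Hh_one]
      simp [Hh]
  | succ n ihn =>
    intro r
    induction r with
    | zero => simp [Hh]
    | succ r ihr =>
      have step : Hh f (n+2) (r+1) = Hh f (n+1) (r+1) + f (n+1) * Hh f (n+2) r := by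
        simp only [Hh]
      rw [step, ihn (r+1), ihr]
      rw [sum_antidiagonal_succ'
        (f := fun p => f 0 ^ p.1 * Hh (fun k => f (k+1)) n p.2),
        sum_antidiagonal_succ'
        (f := fun p => f 0 ^ p.1 * Hh (fun k => f (k+1)) (n+1) p.2)]
      have h1 : ∀ p ∈ antidiagonal r,
          f 0 ^ p.1 * Hh (fun k => f (k+1)) (n+1) (p.2+1)
            = f 0 ^ p.1 * Hh (fun k => f (k+1)) n (p.2+1)
              + f (n+1) * (f 0 ^ p.1 * Hh (fun k => f (k+1)) (n+1) p.2) := by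
        intro p _
        simp only [Hh]
        ring
      rw [Finset.sum_congr rfl h1, Finset.sum_add_distrib, ← Finset.mul_sum]
      have h2 : Hh (fun k => f (k+1)) (n+1) 0 = Hh (fun k => f (k+1)) n 0 := by
        simp [Hh]
      simp only [h2]
      ring

private lemma Hsum : ∀ (n : ℕ) (f : ℕ → ℤ) (r : ℕ),
    (∑ α ∈ antidiagonalTuple n r, ∏ i : Fin n, f (i : ℕ) ^ α i) = Hh f n r := by
  intro n
  induction n with
  | zero =>
    intro f r
    cases r with
    | zero => simp [Finset.Nat.antidiagonalTuple_zero_zero, Hh]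
    | succ r => simp [Finset.Nat.antidiagonalTuple_zero_succ, Hh_zero_succ]
  | succ n ih =>
    intro f r
    rw [adt_succ_sum n r (fun α => ∏ i : Fin (n+1), f (i : ℕ) ^ α i), Hfront]
    refine Finset.sum_congr rfl fun p _ => ?_
    have h1 : ∀ β ∈ antidiagonalTuple n p.2,
        (∏ i : Fin (n+1), f (i : ℕ) ^ (Fin.cons p.1 β : Fin (n+1) → ℕ) i)
          = f 0 ^ p.1 * ∏ i : Fin n, f ((i : ℕ)+1) ^ β i := by
      intro β _
      rw [Fin.prod_univ_succ]
      simp [Fin.cons_zero, Fin.cons_succ]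
    rw [Finset.sum_congr rfl h1, ← Finset.mul_sum, ih (fun k => f (k+1)) p.2]

private lemma Rsum (z : ℕ → ℤ) : ∀ (l s : ℕ) (Y : ℕ → ℤ),
    (∑ i ∈ (Finset.univ : Finset (Fin l → Fin s)).filter
        (fun i => ∀ a b : Fin l, a ≤ b → i a ≤ i b),
      ∏ t : Fin l, (Y ((i t : ℕ)) - z ((i t : ℕ) + (t : ℕ)))) = Rr Y z s l := by
  intro l
  induction l with
  | zero =>
    intro s Y
    have h0 : Rr Y z s 0 = 1 := by cases s <;> simp [Rr]
    rw [h0]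
    rw [Finset.filter_true_of_mem (fun i _ => fun a _ _ => a.elim0)]
    simp
  | succ l ihl =>
    intro s
    induction s with
    | zero =>
      intro Y
      have h0 : Rr Y z 0 (l+1) = 0 := by simp [Rr]
      rw [h0, Finset.univ_eq_empty, Finset.filter_empty, Finset.sum_empty]
    | succ s ihs =>
      intro Y
      rw [← Finset.sum_filter_add_sum_filter_not _
        (fun i : Fin (l+1) → Fin (s+1) => i (Fin.last l) = Fin.last s)]
      have part2 : (∑ i ∈ ((Finset.univ : Finset (Fin (l+1) → Fin (s+1))).filter
            (fun i => ∀ a b : Fin (l+1), a ≤ b → i a ≤ i b)).filter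
            (fun i => ¬ i (Fin.last l) = Fin.last s),
          ∏ t : Fin (l+1), (Y ((i t : ℕ)) - z ((i t : ℕ) + (t : ℕ))))
          = Rr Y z s (l+1) := by
        rw [← ihs Y]
        have hbnd : ∀ (i : Fin (l+1) → Fin (s+1)), (∀ a b : Fin (l+1), a ≤ b → i a ≤ i b) →
            ¬ i (Fin.last l) = Fin.last s → ∀ t, (i t : ℕ) < s := by
          intro i hmono hne t
          have h1 : (i t : ℕ) ≤ (i (Fin.last l) : ℕ) := hmono t (Fin.last l) (Fin.le_last t)
          have h2 : (i (Fin.last l) : ℕ) < s + 1 := (i (Fin.last l)).2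
          have h3 : (i (Fin.last l) : ℕ) ≠ s := fun h => hne (Fin.ext h)
          omega
        refine Finset.sum_bij'
          (fun i hi => fun t => (⟨(i t : ℕ),
            hbnd i (Finset.mem_filter.mp (Finset.mem_filter.mp hi).1).2
              (Finset.mem_filter.mp hi).2 t⟩ : Fin s))
          (fun j _ => fun t => (j t).castSucc) ?_ ?_ ?_ ?_ ?_
        · intro i hi
          simp only [Finset.mem_filter, Finset.mem_univ, true_and] at hi ⊢
          intro a b hab
          exact hi.1 a b hab
        · intro j hj
          simp only [Finset.mem_filter, Finset.mem_univ, true_and] at hj ⊢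
          refine ⟨fun a b hab => Fin.castSucc_le_castSucc_iff.mpr (hj a b hab), ?_⟩
          exact Fin.ne_last_of_lt (Fin.castSucc_lt_last _)
        · intro i hi
          funext t
          exact Fin.ext rfl
        · intro j hj
          funext t
          exact Fin.ext rfl
        · intro i hi
          rfl
      have part1 : (∑ i ∈ ((Finset.univ : Finset (Fin (l+1) → Fin (s+1))).filter
            (fun i => ∀ a b : Fin (l+1), a ≤ b → i a ≤ i b)).filter
            (fun i => i (Fin.last l) = Fin.last s),
          ∏ t : Fin (l+1), (Y ((i t : ℕ)) - z ((i t : ℕ) + (t : ℕ))))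
          = (Y s - z (s + l)) * Rr Y z (s+1) l := by
        rw [← ihl (s+1) Y, Finset.mul_sum]
        refine Finset.sum_bij'
          (fun i _ => fun t : Fin l => i t.castSucc)
          (fun j _ => Fin.snoc j (Fin.last s)) ?_ ?_ ?_ ?_ ?_
        · intro i hi
          simp only [Finset.mem_filter, Finset.mem_univ, true_and] at hi ⊢
          intro a b hab
          exact hi.1 a.castSucc b.castSucc (Fin.castSucc_le_castSucc_iff.mpr hab)
        · intro j hj
          simp only [Finset.mem_filter, Finset.mem_univ, true_and] at hj ⊢
          constructor
          · intro a b
            refine Fin.lastCases ?_ ?_ b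
            · intro _
              rw [Fin.snoc_last]
              exact Fin.le_last _
            · intro b' hab'
              revert hab'
              refine Fin.lastCases ?_ ?_ a
              · intro ha
                exact absurd ha (not_le.mpr (Fin.castSucc_lt_last b'))
              · intro a' ha
                rw [Fin.snoc_castSucc, Fin.snoc_castSucc]
                exact hj a' b' (Fin.castSucc_le_castSucc_iff.mp ha)
          · exact Fin.snoc_last _ _
        · intro i hi
          simp only [Finset.mem_filter, Finset.mem_univ, true_and] at hi
          funext t
          refine Fin.lastCases ?_ ?_ t
          · simp only [Fin.snoc_last]
            exact hi.2.symm
          · intro t'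
            simp only [Fin.snoc_castSucc]
        · intro j hj
          funext t
          simp only [Fin.snoc_castSucc]
        · intro i hi
          simp only [Finset.mem_filter, Finset.mem_univ, true_and] at hi
          rw [Fin.prod_univ_castSucc, hi.2]
          simp only [Fin.coe_castSucc, Fin.val_last]
          ring
      rw [part1, part2, Rr_succ]
      ring



/-- Let `s ≥ 1`, `l ≥ 1` and `y 0 < y 1 < ⋯ < y (s-1)` integers
(here `y : Fin s → ℤ` is 0-indexed, corresponding to `y_1 < ⋯ < y_s`).
With `ν_m` the `m`-th elementary symmetric function of `1, …, s+l-1`, one has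
`Σ_{r=0}^l (-1)^{l-r} ν_{l-r} h_r(y) = Σ_{1 ≤ i_1 ≤ ⋯ ≤ i_l ≤ s} Π_t (y_{i_t} - (i_t + t - 1))`,
where `h_r` is the complete homogeneous symmetric function of degree `r`.
On the right, the 1-indexed quantity `i_t + t - 1` becomes `(i t) + t + 1` after
0-indexing both `i_t` and `t`. -/
theorem stmt0 (s l : ℕ) (hs : 1 ≤ s) (hl : 1 ≤ l) (y : Fin s → ℤ) (hy : StrictMono y) :
    ∑ r ∈ Finset.range (l + 1),
      (-1 : ℤ) ^ (l - r) *
        (∑ A ∈ (Finset.Icc 1 (s + l - 1)).powersetCard (l - r), ∏ x ∈ A, (x : ℤ)) *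
        (∑ α ∈ Finset.Nat.antidiagonalTuple s r, ∏ i : Fin s, y i ^ α i) =
    ∑ i ∈ Finset.univ.filter (fun i : Fin l → Fin s => ∀ a b : Fin l, a ≤ b → i a ≤ i b),
      ∏ t : Fin l, (y (i t) - (((i t : ℕ) : ℤ) + ((t : ℕ) : ℤ) + 1)) := by
  obtain ⟨s', rfl⟩ : ∃ s', s = s' + 1 := ⟨s - 1, by omega⟩
  obtain ⟨Y, hYy⟩ : ∃ Y : ℕ → ℤ, ∀ i : Fin (s'+1), Y (i : ℕ) = y i :=
    ⟨fun k => if h : k < s'+1 then y ⟨k, h⟩ else 0, fun i => by simp [show (i:ℕ) < s'+1 from i.2]⟩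
  have hidx : s' + 1 + l - 1 = s' + l := by omega
  have hll : Ll Y (fun k => (k:ℤ)+1) s' l
      = ∑ r ∈ Finset.range (l+1),
          (-1:ℤ)^(l-r) * Ee (fun k => (k:ℤ)+1) (s'+l) (l-r) * Hh Y (s'+1) r := by
    simp only [Ll]
    rw [Finset.Nat.sum_antidiagonal_eq_sum_range_succ_mk, ← Finset.sum_range_reflect]
    refine Finset.sum_congr rfl fun r hr => ?_
    have h1 : l + 1 - 1 - r = l - r := by omega
    have h2 : l - (l - r) = r := by
      rw [Finset.mem_range] at hr
      omega
    rw [h1, h2]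
  trans (Ll Y (fun k => (k:ℤ)+1) s' l)
  · rw [hll]
    refine Finset.sum_congr rfl fun r _ => ?_
    rw [hidx, Esum]
    congr 1
    rw [← Hsum (s'+1) Y r]
    exact Finset.sum_congr rfl fun α _ => Finset.prod_congr rfl fun i _ => by rw [hYy i]
  trans (Rr Y (fun k => (k:ℤ)+1) (s'+1) l)
  · exact LeqR Y (fun k => (k:ℤ)+1) l s'
  rw [← Rsum (fun k => (k:ℤ)+1) l (s'+1) Y]
  refine Finset.sum_congr rfl fun i _ => Finset.prod_congr rfl fun t _ => ?_
  rw [hYy (i t)]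
  push_cast
  ring
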